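/- Let s, t ∈ ℝ with s ≠ 3, and define the real polynomials φ(p) = (3−s)·p³ − t·p² − (9+s)·p − t and α(p) = (3−s)·p² − (3+s). Then there exists p ∈ ℝ with φ(p) = 0 and α(p) = 0 if and only if s² + t² = 9. -/

import Mathlib

/-- Proposition 5.1, third bullet: for `s ≠ 3`, the cubic
`φ(p) = (3−s)p³ − tp² − (9+s)p − t` and the quadratic `α(p) = (3−s)p² − (3+s)`
have a common real root if and only if `s² + t² = 9`. -/
theorem stmt13 (s t : ℝ) (hs : s ≠ 3) :
    (∃ p : ℝ, (3 - s) * p ^ 3 - t * p ^ 2 - (9 + s) * p - t = 0 ∧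
              (3 - s) * p ^ 2 - (3 + s) = 0) ↔
    s ^ 2 + t ^ 2 = 9 := by
  constructor
  · rintro ⟨p, h1, h2⟩
    have h3 : t * p ^ 2 + 6 * p + t = 0 := by linear_combination -h1 + p * h2
    have h4 : t + p * (3 - s) = 0 := by
      linear_combination ((3 - s) * h3 - t * h2) / 6
    linear_combination (t - p * (3 - s)) * h4 + (3 - s) * h2
  · intro h
    have hs' : s - 3 ≠ 0 := sub_ne_zero.mpr hs
    have hp2 : (3 - s) * (t / (s - 3)) ^ 2 - (3 + s) = 0 := by
      field_simp
      ring_nf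
      linear_combination (3 - s) * h
    have key : t * (t / (s - 3)) ^ 2 + 6 * (t / (s - 3)) + t = 0 := by
      field_simp
      ring_nf
      linear_combination t * h
    exact ⟨t / (s - 3), by linear_combination (t / (s - 3)) * hp2 - key, hp2⟩
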